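/- Let Γ be a group, k ≥ 1 an integer, and ℓ : Γ → ℝ a function with ℓ(γ) ≥ 0 and ℓ(γ⁻¹) = ℓ(γ) for all γ. For a finitely supported function f : Γ → ℂ and m ∈ ℕ set ν_m(f) = (Σ_{γ∈Γ} (1+ℓ(γ))^{2m}·|f(γ)|²)^{1/2}, and for finitely supported f, g define the convolution (f∗g)(γ) = Σ_{γ₁γ₂=γ} f(γ₁)g(γ₂). Assume the Haagerup inequality: there exist N ∈ ℕ and C' > 0 such that ‖f∗g‖₂ ≤ C'·ν_N(f)·‖g‖₂ for all finitely supported f, g : Γ → ℂ, where ‖·‖₂ is the ℓ² norm. Let c : Γ^k → ℂ satisfy |c(γ₁,…,γ_k)| ≤ C·(1+ℓ(γ₁))^{a₁}·…·(1+ℓ(γ_k))^{a_k} for some constant C > 0 and natural numbers a₁,…,a_k, and let w : Γ^{k+1} → ℂ satisfy |w(γ₀,…,γ_k)| ≤ 1. Then for all finitely supported f₀, f₁, …, f_k : Γ → ℂ one has |Σ_{γ₀γ₁⋯γ_k = e} f₀(γ₀)·f₁(γ₁)·…·f_k(γ_k)·c(γ₁,…,γ_k)·w(γ₀,…,γ_k)|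 ≤ C·(C')^k·ν₀(f₀)·ν_{N+a₁}(f₁)·…·ν_{N+a_k}(f_k). -/

import Mathlib

open Function Finset

set_option linter.unusedSectionVars false

namespace CyclicAux

variable {Γ : Type*} [Group Γ] [DecidableEq Γ]

noncomputable def convR (p q : Γ → ℝ) : Γ → ℝ := fun γ => ∑' y, p y * q (y⁻¹ * γ)

noncomputable def deltaR : Γ → ℝ := fun γ => if γ = 1 then 1 else 0

noncomputable def convFnR : (n : ℕ) → (Fin n → Γ → ℝ) → Γ → ℝ
  | 0, _ => deltaR
  | n + 1, F => convR (F 0) (convFnR n fun i => F i.succ)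

lemma convR_apply (p q : Γ → ℝ) {s : Finset Γ} (hs : ∀ y, y ∉ s → p y = 0) (γ : Γ) :
    convR p q γ = ∑ y ∈ s, p y * q (y⁻¹ * γ) :=
  tsum_eq_sum (fun y hy => by rw [hs y hy, zero_mul])

lemma support_convR {p q : Γ → ℝ} (hp : (support p).Finite) (hq : (support q).Finite) :
    (support (convR p q)).Finite := by
  apply (hp.mul hq).subset
  intro γ hγ
  have : ∃ y, p y * q (y⁻¹ * γ) ≠ 0 := by
    by_contra h
    push_neg at h
    exact hγ (by simp [convR, tsum_congr fun y => h y, tsum_zero])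
  obtain ⟨y, hy⟩ := this
  have h1 : p y ≠ 0 := fun h => hy (by simp [h])
  have h2 : q (y⁻¹ * γ) ≠ 0 := fun h => hy (by simp [h])
  exact ⟨y, h1, y⁻¹ * γ, h2, by group⟩

lemma convR_nonneg {p q : Γ → ℝ} (hp : ∀ γ, 0 ≤ p γ) (hq : ∀ γ, 0 ≤ q γ) (γ : Γ) :
    0 ≤ convR p q γ :=
  tsum_nonneg fun y => mul_nonneg (hp y) (hq _)

lemma support_convFnR {n : ℕ} {F : Fin n → Γ → ℝ} (hF : ∀ i, (support (F i)).Finite) :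
    (support (convFnR n F)).Finite := by
  induction n with
  | zero =>
    apply Set.Finite.subset (Set.finite_singleton (1 : Γ))
    intro γ hγ
    simp only [convFnR, deltaR, support] at hγ
    by_contra h
    simp only [Set.mem_singleton_iff] at h
    exact hγ (by simp [h])
  | succ n ih =>
    exact support_convR (hF 0) (ih fun i => hF i.succ)

lemma convFnR_nonneg {n : ℕ} {F : Fin n → Γ → ℝ} (hF : ∀ i γ, 0 ≤ F i γ) (γ : Γ) :
    0 ≤ convFnR n F γ := by
  induction n generalizing γ with
  | zero => simp only [convFnR, deltaR]; split <;> norm_num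
  | succ n ih => exact convR_nonneg (hF 0) (fun γ => ih (fun i γ => hF i.succ γ) γ) γ

/-- pointwise formula for the iterated convolution -/
lemma convFnR_eq_sum {n : ℕ} (F : Fin n → Γ → ℝ) (t : Fin n → Finset Γ)
    (ht : ∀ i, support (F i) ⊆ (t i : Set Γ)) (x : Γ) :
    convFnR n F x = ∑ h ∈ Fintype.piFinset t,
      if (List.ofFn h).prod = x then ∏ i, F i (h i) else 0 := by
  induction n generalizing x with
  | zero =>
    have : Fintype.piFinset t = Finset.univ := by
      ext g; simp [Fintype.mem_piFinset]
    rw [this]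
    rw [Fintype.sum_eq_single (fun i => i.elim0)]
    · simp only [convFnR, deltaR, List.ofFn_zero, List.prod_nil, Finset.univ_eq_empty,
        Finset.prod_empty]
      by_cases h : x = 1 <;> simp [h, eq_comm]
    · intro g hg
      exact absurd (funext fun i => i.elim0) hg
  | succ n ih =>
    have hF0 : ∀ y, y ∉ t 0 → F 0 y = 0 := by
      intro y hy
      by_contra h
      exact hy (ht 0 h)
    rw [show convFnR (n+1) F = convR (F 0) (convFnR n fun i => F i.succ) from rfl,
      convR_apply _ _ hF0]
    have : ∀ y : Γ, convFnR n (fun i => F i.succ) (y⁻¹ * x) =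
        ∑ h ∈ Fintype.piFinset (fun i : Fin n => t i.succ),
          if (List.ofFn h).prod = y⁻¹ * x then ∏ i, F i.succ (h i) else 0 :=
      fun y => ih _ _ (fun i => ht i.succ) _
    simp_rw [this, Finset.mul_sum]
    rw [Finset.sum_sigma']
    refine Finset.sum_nbij' (fun p => Fin.cons p.1 p.2) (fun g => ⟨g 0, fun i => g i.succ⟩)
      ?_ ?_ ?_ ?_ ?_
    · rintro ⟨y, h⟩ hp
      simp only [Finset.mem_sigma, Fintype.mem_piFinset] at hp ⊢
      intro i
      refine Fin.cases ?_ ?_ i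
      · simpa using hp.1
      · intro j; simpa using hp.2 j
    · intro g hg
      simp only [Fintype.mem_piFinset] at hg
      simp only [Finset.mem_sigma, Fintype.mem_piFinset]
      exact ⟨hg 0, fun i => hg i.succ⟩
    · rintro ⟨y, h⟩ _
      simp [Fin.cons_zero, Fin.tail]
    · intro g _
      simp [Fin.cons_self_tail]
      exact funext fun i => Fin.cases rfl (fun j => rfl) i
    · rintro ⟨y, h⟩ hp
      simp only [List.ofFn_succ, List.prod_cons, Fin.cons_zero, Fin.cons_succ]
      rw [mul_ite, mul_zero]
      congr 1
      · rw [eq_iff_iff]; exact eq_inv_mul_iff_mul_eq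
      · rw [Fin.prod_univ_succ]
        simp [Fin.cons_zero, Fin.cons_succ]

section Nu

variable (ℓ : Γ → ℝ) (ν : ℕ → (Γ → ℂ) → ℝ)
  (hνdef : ∀ (m : ℕ) (f : Γ → ℂ),
      ν m f = Real.sqrt (∑' γ : Γ, (1 + ℓ γ) ^ (2 * m) * ‖f γ‖ ^ 2))

include hνdef

lemma nu_nonneg (m : ℕ) (f : Γ → ℂ) : 0 ≤ ν m f := by
  rw [hνdef]; exact Real.sqrt_nonneg _

lemma nu_deltaR : ν 0 (fun γ => ((deltaR γ : ℝ) : ℂ)) = 1 := by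
  rw [hνdef]
  have : ∀ γ : Γ, (1 + ℓ γ) ^ (2 * 0) * ‖((deltaR γ : ℝ) : ℂ)‖ ^ 2
      = if γ = 1 then 1 else 0 := by
    intro γ
    simp only [mul_zero, pow_zero, one_mul, Complex.norm_real, deltaR]
    split <;> simp
  rw [tsum_congr this, tsum_ite_eq, Real.sqrt_one]

variable (N : ℕ) (C' : ℝ) (hC' : 0 < C')
  (hHaagerup : ∀ f g : Γ → ℂ, (Function.support f).Finite →
      (Function.support g).Finite →
      ν 0 (fun γ => ∑' γ₁ : Γ, f γ₁ * g (γ₁⁻¹ * γ)) ≤ C' * ν N f * ν 0 g)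

include hC' hHaagerup

lemma nu_convFnR_le (n : ℕ) (F : Fin n → Γ → ℝ) (hF : ∀ i, (support (F i)).Finite) :
    ν 0 (fun γ => ((convFnR n F γ : ℝ) : ℂ))
      ≤ C' ^ n * ∏ i, ν N (fun γ => ((F i γ : ℝ) : ℂ)) := by
  induction n with
  | zero =>
    simp only [pow_zero, Finset.univ_eq_empty, Finset.prod_empty, mul_one]
    exact le_of_eq (nu_deltaR ℓ ν hνdef)
  | succ n ih =>
    have hQfin : (support (convFnR n fun i => F i.succ)).Finite :=
      support_convFnR fun i => hF i.succ
    have hcoe : ∀ (p : Γ → ℝ), support (fun γ => ((p γ : ℝ) : ℂ)) = support p := by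
      intro p; ext γ; simp [support]
    have key : (fun γ => ((convFnR (n+1) F γ : ℝ) : ℂ))
        = fun γ => ∑' γ₁ : Γ, ((F 0 γ₁ : ℝ) : ℂ) *
            (((convFnR n fun i => F i.succ) (γ₁⁻¹ * γ) : ℝ) : ℂ) := by
      funext γ
      show ((convR (F 0) (convFnR n fun i => F i.succ) γ : ℝ) : ℂ) = _
      rw [convR, Complex.ofReal_tsum]
      exact tsum_congr fun y => by push_cast; ring
    rw [key]
    have h1 := hHaagerup (fun γ => ((F 0 γ : ℝ) : ℂ))
      (fun γ => (((convFnR n fun i => F i.succ) γ : ℝ) : ℂ))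
      (by rw [hcoe]; exact hF 0) (by rw [hcoe]; exact hQfin)
    beta_reduce at h1
    refine h1.trans ?_
    have h2 := ih (fun i => F i.succ) (fun i => hF i.succ)
    calc C' * ν N (fun γ => ((F 0 γ : ℝ) : ℂ)) *
          ν 0 (fun γ => (((convFnR n fun i => F i.succ) γ : ℝ) : ℂ))
        ≤ C' * ν N (fun γ => ((F 0 γ : ℝ) : ℂ)) *
          (C' ^ n * ∏ i : Fin n, ν N (fun γ => ((F i.succ γ : ℝ) : ℂ))) := by
          refine mul_le_mul_of_nonneg_left h2 ?_
          exact mul_nonneg hC'.le (nu_nonneg ℓ ν hνdef _ _)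
      _ = C' ^ (n+1) * ∏ i : Fin (n+1), ν N (fun γ => ((F i γ : ℝ) : ℂ)) := by
          rw [Fin.prod_univ_succ, pow_succ]; ring

end Nu

end CyclicAux

open CyclicAux

/-- **Continuity of cyclic cocycles under the Haagerup inequality** (abstract form of
Lemma `taucforrd`). Assume `Γ` satisfies the Haagerup inequality with constants `N, C'`
for the weighted norms `ν_m(f) = (Σ_γ (1+ℓ(γ))^{2m} |f(γ)|²)^{1/2}`, `c : Γ^k → ℂ` is
polynomially bounded, and `|w| ≤ 1`. Then for all finitely supported `f₀, …, f_k`,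
`|Σ_{γ₀⋯γ_k = e} f₀(γ₀)⋯f_k(γ_k) c(γ₁,…,γ_k) w(γ₀,…,γ_k)|
   ≤ C (C')^k ν₀(f₀) ν_{N+a₁}(f₁) ⋯ ν_{N+a_k}(f_k)`. -/
theorem cyclic_cocycle_haagerup_estimate {Γ : Type*} [Group Γ] [DecidableEq Γ] (k : ℕ) (hk : 1 ≤ k)
    (ℓ : Γ → ℝ) (hℓ0 : ∀ γ : Γ, 0 ≤ ℓ γ) (hℓinv : ∀ γ : Γ, ℓ γ⁻¹ = ℓ γ)
    (ν : ℕ → (Γ → ℂ) → ℝ)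
    (hνdef : ∀ (m : ℕ) (f : Γ → ℂ),
      ν m f = Real.sqrt (∑' γ : Γ, (1 + ℓ γ) ^ (2 * m) * ‖f γ‖ ^ 2))
    (N : ℕ) (C' : ℝ) (hC' : 0 < C')
    (hHaagerup : ∀ f g : Γ → ℂ, (Function.support f).Finite →
      (Function.support g).Finite →
      ν 0 (fun γ => ∑' γ₁ : Γ, f γ₁ * g (γ₁⁻¹ * γ)) ≤ C' * ν N f * ν 0 g)
    (C : ℝ) (hC : 0 < C) (a : Fin k → ℕ)
    (c : (Fin k → Γ) → ℂ)
    (hc : ∀ g : Fin k → Γ, ‖c g‖ ≤ C * ∏ i : Fin k, (1 + ℓ (g i)) ^ (a i))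
    (w : (Fin (k + 1) → Γ) → ℂ) (hw : ∀ g : Fin (k + 1) → Γ, ‖w g‖ ≤ 1)
    (f : Fin (k + 1) → Γ → ℂ) (hf : ∀ i, (Function.support (f i)).Finite) :
    ‖(∑' g : Fin (k + 1) → Γ,
        if (List.ofFn g).prod = 1 then
          (∏ i : Fin (k + 1), f i (g i)) * c (fun j : Fin k => g j.succ) * w g
        else 0)‖
      ≤ C * C' ^ k * ν 0 (f 0) * ∏ j : Fin k, ν (N + a j) (f j.succ) := by
  classical
  have hpos : ∀ γ : Γ, (0:ℝ) < 1 + ℓ γ := fun γ => by linarith [hℓ0 γ]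
  set b : Fin (k+1) → ℕ := Fin.cases 0 a with hb
  set Fr : Fin (k+1) → Γ → ℝ := fun i γ => ‖f i γ‖ * (1 + ℓ γ) ^ (b i) with hFr
  have hFrnn : ∀ i γ, 0 ≤ Fr i γ := fun i γ =>
    mul_nonneg (norm_nonneg _) (pow_nonneg (hpos γ).le _)
  have hFrsupp : ∀ i, support (Fr i) ⊆ support (f i) := by
    intro i γ hγ
    simp only [mem_support] at hγ ⊢
    intro h
    apply hγ
    simp [hFr, h]
  have hFrfin : ∀ i, (support (Fr i)).Finite := fun i => (hf i).subset (hFrsupp i)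
  set t : Fin (k+1) → Finset Γ := fun i => (hf i).toFinset with htdef
  have hts : ∀ i, support (Fr i) ⊆ (t i : Set Γ) := by
    intro i
    rw [htdef]
    simpa [Set.Finite.coe_toFinset] using hFrsupp i
  set s : Finset (Fin (k+1) → Γ) := Fintype.piFinset t with hs
  set T : (Fin (k+1) → Γ) → ℂ := fun g =>
    if (List.ofFn g).prod = 1 then
      (∏ i : Fin (k + 1), f i (g i)) * c (fun j : Fin k => g j.succ) * w g
    else 0 with hT
  have hT0 : ∀ g, g ∉ s → T g = 0 := by
    intro g hg
    rw [hs, Fintype.mem_piFinset] at hg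
    push_neg at hg
    obtain ⟨i, hi⟩ := hg
    have : f i (g i) = 0 := by
      rw [htdef] at hi
      simpa [Set.Finite.mem_toFinset, mem_support, not_not] using hi
    have hprod : (∏ i : Fin (k + 1), f i (g i)) = 0 :=
      Finset.prod_eq_zero (Finset.mem_univ i) this
    simp [hT, hprod]
  have htsum : (∑' g : Fin (k + 1) → Γ, T g) = ∑ g ∈ s, T g := tsum_eq_sum hT0
  -- pointwise bound
  have hpoint : ∀ g : Fin (k+1) → Γ, ‖T g‖
      ≤ if (List.ofFn g).prod = 1 then C * ∏ i : Fin (k+1), Fr i (g i) else 0 := by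
    intro g
    simp only [hT]
    split
    · rw [norm_mul, norm_mul, norm_prod]
      have h1 : ∏ i : Fin (k+1), ‖f i (g i)‖ ≥ 0 :=
        Finset.prod_nonneg fun i _ => norm_nonneg _
      have hcb := hc fun j : Fin k => g j.succ
      have hwb := hw g
      calc (∏ i : Fin (k+1), ‖f i (g i)‖) *
            ‖c fun j : Fin k => g j.succ‖ * ‖w g‖
          ≤ (∏ i : Fin (k+1), ‖f i (g i)‖) *
            (C * ∏ j : Fin k, (1 + ℓ (g j.succ)) ^ (a j)) * 1 := by
            apply mul_le_mul
            · exact mul_le_mul_of_nonneg_left hcb h1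
            · exact hwb
            · exact norm_nonneg _
            · exact mul_nonneg h1 (le_trans (norm_nonneg _) hcb)
        _ = C * ∏ i : Fin (k+1), Fr i (g i) := by
            rw [mul_one]
            have : ∏ i : Fin (k+1), Fr i (g i)
                = (∏ i : Fin (k+1), ‖f i (g i)‖) *
                  ∏ i : Fin (k+1), (1 + ℓ (g i)) ^ (b i) := by
              rw [← Finset.prod_mul_distrib]
            rw [this]
            have hbp : ∏ i : Fin (k+1), (1 + ℓ (g i)) ^ (b i)
                = ∏ j : Fin k, (1 + ℓ (g j.succ)) ^ (a j) := by
              rw [Fin.prod_univ_succ]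
              have hb0 : b 0 = 0 := rfl
              have hbs : ∀ j : Fin k, b j.succ = a j := fun j => rfl
              simp only [hb0, pow_zero, one_mul]
              exact Finset.prod_congr rfl fun j _ => by rw [hbs j]
            rw [hbp]; ring
    · simp
  -- main chain
  set G : Γ → ℝ := convFnR k (fun j => Fr j.succ) with hG
  have hGfin : (support G).Finite := support_convFnR fun j => hFrfin j.succ
  have hGnn : ∀ γ, 0 ≤ G γ := convFnR_nonneg fun j γ => hFrnn j.succ γ
  have key : ∑ g ∈ s, (if (List.ofFn g).prod = 1 then ∏ i : Fin (k+1), Fr i (g i) else 0)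
      = ∑ y ∈ t 0, Fr 0 y * G y⁻¹ := by
    rw [← convFnR_eq_sum Fr t hts 1]
    rw [show convFnR (k+1) Fr = convR (Fr 0) (convFnR k fun j => Fr j.succ) from rfl]
    rw [convR_apply _ _ (fun y hy => by
      by_contra h
      exact hy (hts 0 h))]
    exact Finset.sum_congr rfl fun y _ => by rw [mul_one, ← hG]
  -- Cauchy-Schwarz
  have hnu0 : Real.sqrt (∑ y ∈ t 0, Fr 0 y ^ 2) ≤ ν 0 (f 0) := by
    rw [hνdef]
    apply Real.sqrt_le_sqrt
    have hsummand : ∀ y : Γ, Fr 0 y ^ 2 = (1 + ℓ y) ^ (2 * 0) * ‖f 0 y‖ ^ 2 := by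
      intro y
      have : b 0 = 0 := rfl
      simp [hFr, this, mul_zero, pow_zero]
    calc ∑ y ∈ t 0, Fr 0 y ^ 2
        = ∑ y ∈ t 0, (1 + ℓ y) ^ (2 * 0) * ‖f 0 y‖ ^ 2 :=
          Finset.sum_congr rfl fun y _ => hsummand y
      _ ≤ ∑' y : Γ, (1 + ℓ y) ^ (2 * 0) * ‖f 0 y‖ ^ 2 := by
          apply Summable.sum_le_tsum
          · intro y _
            exact mul_nonneg (pow_nonneg (hpos y).le _) (sq_nonneg _)
          · apply summable_of_ne_finset_zero (s := t 0)
            intro y hy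
            have : f 0 y = 0 := by
              rw [htdef] at hy
              simpa [Set.Finite.mem_toFinset, mem_support, not_not] using hy
            simp [this]
  have hnuG : Real.sqrt (∑ y ∈ t 0, G y⁻¹ ^ 2) ≤ ν 0 (fun γ => ((G γ : ℝ) : ℂ)) := by
    rw [hνdef]
    apply Real.sqrt_le_sqrt
    have himg : ∑ y ∈ t 0, G y⁻¹ ^ 2 = ∑ z ∈ (t 0).image (·⁻¹), G z ^ 2 := by
      rw [Finset.sum_image (fun x _ y _ h => inv_injective h)]
    rw [himg]
    have hsummand : ∀ z : Γ, (1 + ℓ z) ^ (2 * 0) * ‖((G z : ℝ) : ℂ)‖ ^ 2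
        = G z ^ 2 := by
      intro z
      simp [mul_zero, pow_zero, Complex.norm_real, Real.norm_eq_abs, sq_abs]
    calc ∑ z ∈ (t 0).image (·⁻¹), G z ^ 2
        ≤ ∑' z : Γ, G z ^ 2 := by
          apply Summable.sum_le_tsum
          · intro z _; exact sq_nonneg _
          · apply summable_of_ne_finset_zero (s := hGfin.toFinset)
            intro z hz
            have : G z = 0 := by
              simpa [Set.Finite.mem_toFinset, mem_support, not_not] using hz
            simp [this]
      _ = ∑' z : Γ, (1 + ℓ z) ^ (2 * 0) * ‖((G z : ℝ) : ℂ)‖ ^ 2 :=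
          tsum_congr fun z => (hsummand z).symm
  have hCS : ∑ y ∈ t 0, Fr 0 y * G y⁻¹
      ≤ ν 0 (f 0) * ν 0 (fun γ => ((G γ : ℝ) : ℂ)) := by
    have hcs := Finset.sum_mul_sq_le_sq_mul_sq (t 0) (fun y => Fr 0 y) (fun y => G y⁻¹)
    have hnnsum : 0 ≤ ∑ y ∈ t 0, Fr 0 y * G y⁻¹ :=
      Finset.sum_nonneg fun y _ => mul_nonneg (hFrnn 0 y) (hGnn y⁻¹)
    calc ∑ y ∈ t 0, Fr 0 y * G y⁻¹
        = Real.sqrt ((∑ y ∈ t 0, Fr 0 y * G y⁻¹) ^ 2) := (Real.sqrt_sq hnnsum).symm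
      _ ≤ Real.sqrt ((∑ y ∈ t 0, Fr 0 y ^ 2) * ∑ y ∈ t 0, G y⁻¹ ^ 2) :=
          Real.sqrt_le_sqrt hcs
      _ = Real.sqrt (∑ y ∈ t 0, Fr 0 y ^ 2) * Real.sqrt (∑ y ∈ t 0, G y⁻¹ ^ 2) :=
          Real.sqrt_mul (Finset.sum_nonneg fun y _ => sq_nonneg _) _
      _ ≤ ν 0 (f 0) * ν 0 (fun γ => ((G γ : ℝ) : ℂ)) := by
          apply mul_le_mul hnu0 hnuG (Real.sqrt_nonneg _)
          exact nu_nonneg ℓ ν hνdef 0 (f 0)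
  have hGle : ν 0 (fun γ => ((G γ : ℝ) : ℂ))
      ≤ C' ^ k * ∏ j : Fin k, ν (N + a j) (f j.succ) := by
    have h1 := nu_convFnR_le ℓ ν hνdef N C' hC' hHaagerup k (fun j => Fr j.succ)
      (fun j => hFrfin j.succ)
    rw [hG]
    refine h1.trans ?_
    apply le_of_eq
    congr 1
    apply Finset.prod_congr rfl
    intro j _
    rw [hνdef, hνdef]
    congr 1
    apply tsum_congr
    intro γ
    have hbs : b j.succ = a j := rfl
    have habs : ‖((Fr j.succ γ : ℝ) : ℂ)‖ = Fr j.succ γ := by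
      rw [Complex.norm_real, Real.norm_eq_abs, abs_of_nonneg (hFrnn j.succ γ)]
    rw [habs, hFr]
    simp only [hbs]
    rw [mul_pow, ← pow_mul]
    ring
  -- assemble
  rw [htsum]
  calc ‖∑ g ∈ s, T g‖
      ≤ ∑ g ∈ s, ‖T g‖ := norm_sum_le _ _
    _ ≤ ∑ g ∈ s, (if (List.ofFn g).prod = 1 then C * ∏ i : Fin (k+1), Fr i (g i) else 0) :=
        Finset.sum_le_sum fun g _ => hpoint g
    _ = C * ∑ g ∈ s, (if (List.ofFn g).prod = 1 then ∏ i : Fin (k+1), Fr i (g i) else 0) := by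
        rw [Finset.mul_sum]
        exact Finset.sum_congr rfl fun g _ => by rw [mul_ite, mul_zero]
    _ = C * ∑ y ∈ t 0, Fr 0 y * G y⁻¹ := by rw [key]
    _ ≤ C * (ν 0 (f 0) * (C' ^ k * ∏ j : Fin k, ν (N + a j) (f j.succ))) := by
        apply mul_le_mul_of_nonneg_left _ hC.le
        calc ∑ y ∈ t 0, Fr 0 y * G y⁻¹
            ≤ ν 0 (f 0) * ν 0 (fun γ => ((G γ : ℝ) : ℂ)) := hCS
          _ ≤ ν 0 (f 0) * (C' ^ k * ∏ j : Fin k, ν (N + a j) (f j.succ)) :=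
              mul_le_mul_of_nonneg_left hGle (nu_nonneg ℓ ν hνdef 0 (f 0))
    _ = C * C' ^ k * ν 0 (f 0) * ∏ j : Fin k, ν (N + a j) (f j.succ) := by ring
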